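/- Let λ₀ > 0, λ₁ ≥ 0, λ₂ > 0 and set η₀ = (2√(λ₀λ₂) + λ₁)/(2λ₂). The function ψ : ℝ → ℝ defined by ψ(t) = −λ₂(|t| − λ₁/(2λ₂))² + λ₀ if |t| ≥ η₀ and ψ(t) = 0 if |t| < η₀ is concave on ℝ. -/

import Mathlib

noncomputable section


/-- Threshold `η₀ = (2√(λ₀λ₂) + λ₁)/(2λ₂)`. -/
def eta0 (l0 l1 l2 : ℝ) : ℝ := (2 * Real.sqrt (l0 * l2) + l1) / (2 * l2)

/-- Scalar function `ψ` appearing in the dual objective. -/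
def psi (l0 l1 l2 : ℝ) (t : ℝ) : ℝ :=
  if eta0 l0 l1 l2 ≤ |t| then -l2 * (|t| - l1 / (2 * l2)) ^ 2 + l0 else 0

/-- `t ↦ (max (|t| - a) 0)^2` is convex. -/
lemma convexOn_aux (a : ℝ) :
    ConvexOn ℝ Set.univ (fun t : ℝ => (max (|t| - a) 0) ^ 2) := by
  refine ⟨convex_univ, fun x _ y _ p q hp hq hpq => ?_⟩
  simp only [smul_eq_mul]
  set u := max (|x| - a) 0 with hu
  set v := max (|y| - a) 0 with hv
  have hu0 : 0 ≤ u := le_max_right _ _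
  have hv0 : 0 ≤ v := le_max_right _ _
  have hxu : |x| - a ≤ u := le_max_left _ _
  have hyv : |y| - a ≤ v := le_max_left _ _
  have h1 : max (|p * x + q * y| - a) 0 ≤ p * u + q * v := by
    have habs : |p * x + q * y| ≤ p * |x| + q * |y| := by
      calc |p * x + q * y| ≤ |p * x| + |q * y| := abs_add_le _ _
        _ = p * |x| + q * |y| := by
            rw [abs_mul, abs_mul, abs_of_nonneg hp, abs_of_nonneg hq]
    have ha : p * a + q * a = a := by rw [← add_mul, hpq, one_mul]
    refine max_le ?_ (by positivity)
    nlinarith [ha, mul_le_mul_of_nonneg_left hxu hp, mul_le_mul_of_nonneg_left hyv hq]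
  have h2 : (max (|p * x + q * y| - a) 0) ^ 2 ≤ (p * u + q * v) ^ 2 := by
    have := le_max_right (|p * x + q * y| - a) 0
    nlinarith
  have h3 : (p * u + q * v) ^ 2 ≤ p * u ^ 2 + q * v ^ 2 := by
    nlinarith [sq_nonneg (u - v), mul_nonneg hp hq]
  linarith

lemma psi_eq (l0 l1 l2 : ℝ) (hl0 : 0 < l0) (hl2 : 0 < l2) :
    psi l0 l1 l2 = fun t =>
      min (l0 - l2 * (max (|t| - l1 / (2 * l2)) 0) ^ 2) 0 := by
  funext t
  have hs0 : 0 ≤ l0 * l2 := by positivity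
  have hs : Real.sqrt (l0 * l2) ^ 2 = l0 * l2 := Real.sq_sqrt hs0
  have hsp : 0 < Real.sqrt (l0 * l2) := Real.sqrt_pos.mpr (by positivity)
  rw [psi]
  have key : 2 * l2 * (|t| - l1 / (2 * l2)) = 2 * l2 * |t| - l1 := by
    field_simp
  split_ifs with h
  · -- |t| ≥ η₀
    have h' : 2 * Real.sqrt (l0 * l2) + l1 ≤ 2 * l2 * |t| := by
      rw [eta0, div_le_iff₀ (by positivity)] at h
      linarith
    have hd : 2 * Real.sqrt (l0 * l2) ≤ 2 * l2 * (|t| - l1 / (2 * l2)) := by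
      rw [key]; linarith
    have hd0 : 0 ≤ |t| - l1 / (2 * l2) := by nlinarith
    rw [max_eq_left hd0]
    have hsq := mul_le_mul hd hd (by positivity) (by nlinarith)
    have hle : l0 - l2 * (|t| - l1 / (2 * l2)) ^ 2 ≤ 0 := by nlinarith
    rw [min_eq_left hle]; ring
  · -- |t| < η₀
    push_neg at h
    have h' : 2 * l2 * |t| < 2 * Real.sqrt (l0 * l2) + l1 := by
      rw [eta0, lt_div_iff₀ (by positivity)] at h
      linarith
    have hge : 0 ≤ l0 - l2 * (max (|t| - l1 / (2 * l2)) 0) ^ 2 := by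
      rcases le_or_gt (|t| - l1 / (2 * l2)) 0 with hc | hc
      · rw [max_eq_right hc]; nlinarith
      · rw [max_eq_left hc.le]
        have hd : 2 * l2 * (|t| - l1 / (2 * l2)) < 2 * Real.sqrt (l0 * l2) := by
          rw [key]; linarith
        have hsq := mul_le_mul hd.le hd.le (by positivity) (by positivity)
        nlinarith
    rw [min_eq_right hge]

/-- `ψ` is concave on `ℝ`. -/
theorem stmt4 (l0 l1 l2 : ℝ) (hl0 : 0 < l0) (hl1 : 0 ≤ l1) (hl2 : 0 < l2) :
    ConcaveOn ℝ Set.univ (psi l0 l1 l2) := by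
  rw [psi_eq l0 l1 l2 hl0 hl2]
  have hg : ConvexOn ℝ Set.univ
      (fun t : ℝ => (max (|t| - l1 / (2 * l2)) 0) ^ 2) := convexOn_aux _
  have hconc : ConcaveOn ℝ Set.univ
      (fun t : ℝ => l0 - l2 * (max (|t| - l1 / (2 * l2)) 0) ^ 2) := by
    have h1 := ((hg.smul hl2.le).neg).add_const l0
    have h2 : (fun t : ℝ => l0 - l2 * (max (|t| - l1 / (2 * l2)) 0) ^ 2)
        = fun t : ℝ => -(l2 • (max (|t| - l1 / (2 * l2)) 0) ^ 2) + l0 := by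
      funext t; simp [smul_eq_mul]; ring
    rw [h2]; exact h1
  have := hconc.inf (concaveOn_const (0 : ℝ) convex_univ)
  convert this using 1 <;> rfl
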